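/- Fix integers r ≥ 1 and t ≥ 2. For every complex number z, lim_{s→∞} (1/C(r+s,r)) · Σ_{λ ∈ Par_{r,s}} z^{|core_t(λ)|} = Σ_{ρ} z^{|ρ|} · (1/t^r) · r!/(a_0(ρ)! a_1(ρ)! ··· a_{t−1}(ρ)!), where the sum on the right runs over all t-cores ρ ∈ Par_{r,rt} (every t-core with at most r parts lies in Par_{r,rt}). In other words, the probability generating function of the size of the t-core of a uniformly random partition in Par_{r,s} converges, as s → ∞, to the stated finite sum. -/

import Mathlib

open Finset

/-- Partitions in the `r × s` rectangle: weakly decreasing `r`-tuples with parts at most `s`. -/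
def IsRectPartition (r s : ℕ) (lam : Fin r → ℕ) : Prop :=
  (∀ i j : Fin r, i ≤ j → lam j ≤ lam i) ∧ ∀ i, lam i ≤ s

/-- The beta-set `β(λ) = {λ_i + r − i : 1 ≤ i ≤ r}` (with 0-indexed `i`). -/
def betaSet (r : ℕ) (lam : Fin r → ℕ) : Finset ℕ :=
  Finset.image (fun i : Fin r => lam i + (r - 1 - (i : ℕ))) Finset.univ

/-- `λ` is a `t`-core: for every `b ∈ β(λ)` with `b ≥ t`, also `b − t ∈ β(λ)`. -/
def IsTCore (r t : ℕ) (lam : Fin r → ℕ) : Prop :=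
  ∀ b ∈ betaSet r lam, t ≤ b → b - t ∈ betaSet r lam

/-- `n_i = ⌊(r+s+t−1−i)/t⌋`. -/
def nres (r s t i : ℕ) : ℕ := (r + s + t - 1 - i) / t

/-- `a_i(λ) = #{b ∈ β(λ) : b ≡ i (mod t)}`. -/
def aCount (r t : ℕ) (lam : Fin r → ℕ) (i : ℕ) : ℕ :=
  ((betaSet r lam).filter fun b => b % t = i).card

/-- The justification `J(λ)`: in each residue class `i` mod `t`, the `a_i(λ)` smallest
nonnegative integers congruent to `i`. -/
def justification (r t : ℕ) (lam : Fin r → ℕ) : Finset ℕ :=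
  (Finset.range t).biUnion fun i =>
    (Finset.range (aCount r t lam i)).image fun m => i + m * t

/-- The size of the `t`-core of `λ`: `Σ_{b ∈ J(λ)} b − r(r−1)/2`. -/
def coreSize (r t : ℕ) (lam : Fin r → ℕ) : ℕ :=
  (∑ b ∈ justification r t lam, b) - r * (r - 1) / 2

open Filter in
/-- Residue counts of a finset. -/
def aVec (t : ℕ) (B : Finset ℕ) : Fin t → ℕ := fun i => (B.filter fun b => b % t = (i : ℕ)).card

/-- Justified set attached to a residue count vector. -/
def Ja (t : ℕ) (a : Fin t → ℕ) : Finset ℕ :=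
  Finset.univ.biUnion fun i : Fin t => (Finset.range (a i)).image fun m => (i : ℕ) + m * t

/-- Core size as a function of the residue count vector. -/
def Fsize (r t : ℕ) (a : Fin t → ℕ) : ℕ := (∑ b ∈ Ja t a, b) - r * (r - 1) / 2

lemma downclosed_eq_range (M : Finset ℕ) (h : ∀ m, m + 1 ∈ M → m ∈ M) :
    M = Finset.range M.card := by
  have hsub : ∀ d m, m ∈ M → m - d ∈ M := by
    intro d
    induction d with
    | zero => simpa using fun m hm => hm
    | succ d ih =>
      intro m hm
      have h1 : m - d ∈ M := ih m hm
      rcases Nat.eq_zero_or_pos (m - d) with h0 | h0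
      · have : m - (d + 1) = m - d := by omega
        rw [this]; exact h1
      · have : m - d = (m - (d+1)) + 1 := by omega
        exact h _ (by rw [← this]; exact h1)
  have hlt : ∀ m ∈ M, m < M.card := by
    intro m hm
    have : Finset.range (m + 1) ⊆ M := by
      intro k hk
      have hk' : k < m + 1 := Finset.mem_range.1 hk
      have : m - (m - k) = k := by omega
      rw [← this]; exact hsub _ _ hm
    have := Finset.card_le_card this
    simpa using this
  apply Finset.eq_of_subset_of_card_le
  · intro m hm; exact Finset.mem_range.2 (hlt m hm)
  · simp

lemma strictMono_fin_add {r : ℕ} (f : Fin r → ℕ) (hf : StrictMono f) :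
    ∀ (u k : ℕ) (h : u + k < r), f ⟨u, by omega⟩ + k ≤ f ⟨u + k, h⟩ := by
  intro u k
  induction k with
  | zero => intro h; simp
  | succ k ih =>
    intro h
    have h1 : u + k < r := by omega
    have h2 := ih h1
    have h3 : f ⟨u + k, h1⟩ < f ⟨u + k + 1, by omega⟩ := hf (by simp [Fin.lt_def])
    have : (⟨u + (k+1), h⟩ : Fin r) = ⟨u + k + 1, by omega⟩ := by simp [Nat.add_assoc]
    rw [this]; omega

lemma strictMono_fin_le {r : ℕ} (f : Fin r → ℕ) (hf : StrictMono f) (k : Fin r) :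
    (k : ℕ) ≤ f k := by
  have := strictMono_fin_add f hf 0 (k : ℕ) (by simpa using k.isLt)
  have h2 : (⟨0 + (k:ℕ), by simpa using k.isLt⟩ : Fin r) = k := by ext; simp
  rw [h2] at this
  omega

lemma bmap_strictAnti {r s : ℕ} {lam : Fin r → ℕ} (h : IsRectPartition r s lam)
    {i j : Fin r} (hij : i < j) :
    lam j + (r - 1 - (j : ℕ)) < lam i + (r - 1 - (i : ℕ)) := by
  have h1 : lam j ≤ lam i := h.1 i j hij.le
  have h2 : (i : ℕ) < (j : ℕ) := hij
  have h3 : (j : ℕ) < r := j.isLt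
  omega

lemma bmap_injective {r s : ℕ} {lam : Fin r → ℕ} (h : IsRectPartition r s lam) :
    Function.Injective (fun i : Fin r => lam i + (r - 1 - (i : ℕ))) := by
  intro i j hij
  simp only at hij
  rcases lt_trichotomy i j with h' | h' | h'
  · exact absurd hij (by have := bmap_strictAnti h h'; omega)
  · exact h'
  · exact absurd hij (by have := bmap_strictAnti h h'; omega)

lemma betaSet_card {r s : ℕ} {lam : Fin r → ℕ} (h : IsRectPartition r s lam) :
    (betaSet r lam).card = r := by
  rw [betaSet, Finset.card_image_of_injective _ (bmap_injective h)]
  simp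

lemma betaSet_subset {r s : ℕ} {lam : Fin r → ℕ} (h : IsRectPartition r s lam) :
    betaSet r lam ⊆ Finset.range (r + s) := by
  intro b hb
  rw [betaSet, Finset.mem_image] at hb
  obtain ⟨i, -, rfl⟩ := hb
  have h1 : lam i ≤ s := h.2 i
  have h2 : (i : ℕ) < r := i.isLt
  rw [Finset.mem_range]
  omega

lemma betaSet_injOn {r s : ℕ} {lam mu : Fin r → ℕ} (hlam : IsRectPartition r s lam)
    (hmu : IsRectPartition r s mu) (h : betaSet r lam = betaSet r mu) : lam = mu := by
  have hcard : (betaSet r lam).card = r := betaSet_card hlam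
  have key : ∀ (nu : Fin r → ℕ), IsRectPartition r s nu → betaSet r nu = betaSet r lam →
      (fun k : Fin r => nu ⟨r - 1 - (k : ℕ), by omega⟩ + (r - 1 - (r - 1 - (k : ℕ))))
        = (betaSet r lam).orderEmbOfFin hcard := by
    intro nu hnu hbeta
    apply Finset.orderEmbOfFin_unique
    · intro x
      rw [← hbeta, betaSet, Finset.mem_image]
      exact ⟨_, Finset.mem_univ _, rfl⟩
    · intro k k' hkk'
      apply bmap_strictAnti hnu
      have h1 : (k : ℕ) < r := k.isLt
      have h2 : (k' : ℕ) < r := k'.isLt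
      have : (k : ℕ) < (k' : ℕ) := hkk'
      simp only [Fin.mk_lt_mk, Fin.lt_def]
      omega
  have h1 := key lam hlam rfl
  have h2 := key mu hmu h.symm
  funext i
  have hi : (i : ℕ) < r := i.isLt
  have e1 := congrFun (h1.trans h2.symm) ⟨r - 1 - (i : ℕ), by omega⟩
  simp only at e1
  have hii : r - 1 - (r - 1 - (i : ℕ)) = (i : ℕ) := by omega
  simp only [hii, Fin.eta] at e1
  omega

lemma exists_rect_of_subset {r s : ℕ} {B : Finset ℕ} (hBr : B ⊆ Finset.range (r + s))
    (hB : B.card = r) : ∃ lam, IsRectPartition r s lam ∧ betaSet r lam = B := by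
  set f : Fin r → ℕ := fun k => B.orderEmbOfFin hB k with hf
  have hfmono : StrictMono f := (B.orderEmbOfFin hB).strictMono
  have hfmem : ∀ k, f k ∈ B := fun k => Finset.orderEmbOfFin_mem B hB k
  have hflt : ∀ k, f k < r + s := fun k => Finset.mem_range.1 (hBr (hfmem k))
  have hfge : ∀ k : Fin r, (k : ℕ) ≤ f k := fun k => strictMono_fin_le f hfmono k
  have hfub : ∀ k : Fin r, f k ≤ s + (k : ℕ) := by
    intro k
    have hk : (k : ℕ) < r := k.isLt
    have h1 := strictMono_fin_add f hfmono (k : ℕ) (r - 1 - (k : ℕ)) (by omega)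
    have h2 : f ⟨(k : ℕ) + (r - 1 - (k : ℕ)), by omega⟩ < r + s := hflt _
    have h3 : (⟨(k : ℕ), by omega⟩ : Fin r) = k := rfl
    rw [h3] at h1
    omega
  refine ⟨fun i => f ⟨r - 1 - (i : ℕ), by omega⟩ - (r - 1 - (i : ℕ)), ⟨?_, ?_⟩, ?_⟩
  · intro i j hij
    dsimp only
    have hi : (i : ℕ) < r := i.isLt
    have hj : (j : ℕ) < r := j.isLt
    have hij' : (i : ℕ) ≤ (j : ℕ) := hij
    have h1 := strictMono_fin_add f hfmono (r - 1 - (j : ℕ))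
      ((r - 1 - (i : ℕ)) - (r - 1 - (j : ℕ))) (by omega)
    have h2 : (⟨r - 1 - (j : ℕ) + ((r - 1 - (i : ℕ)) - (r - 1 - (j : ℕ))), by omega⟩ : Fin r)
        = ⟨r - 1 - (i : ℕ), by omega⟩ := by
      apply Fin.ext; simp only; omega
    rw [h2] at h1
    have h3 : r - 1 - (j : ℕ) ≤ f ⟨r - 1 - (j : ℕ), by omega⟩ :=
      strictMono_fin_le f hfmono ⟨r - 1 - (j : ℕ), by omega⟩
    omega
  · intro i
    dsimp only
    have hi : (i : ℕ) < r := i.isLt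
    have := hfub ⟨r - 1 - (i : ℕ), by omega⟩
    simp only at this
    omega
  · ext b
    rw [betaSet, Finset.mem_image]
    constructor
    · rintro ⟨i, -, rfl⟩
      have h1 : r - 1 - (i : ℕ) ≤ f ⟨r - 1 - (i : ℕ), by omega⟩ := hfge ⟨r - 1 - (i : ℕ), by omega⟩
      have : f ⟨r - 1 - (i : ℕ), by omega⟩ - (r - 1 - (i : ℕ)) + (r - 1 - (i : ℕ))
          = f ⟨r - 1 - (i : ℕ), by omega⟩ := by omega
      rw [this]
      exact hfmem _
    · intro hb
      have : b ∈ Set.range f := by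
        rw [hf]
        have := Finset.range_orderEmbOfFin B hB
        rw [show (Set.range fun k => (B.orderEmbOfFin hB) k) = Set.range (B.orderEmbOfFin hB)
          from rfl, this]
        exact hb
      obtain ⟨k, hk⟩ := this
      have hkr : (k : ℕ) < r := k.isLt
      refine ⟨⟨r - 1 - (k : ℕ), by omega⟩, Finset.mem_univ _, ?_⟩
      have hidx : r - 1 - (r - 1 - (k : ℕ)) = (k : ℕ) := by omega
      simp only [hidx]
      have h1 : (k : ℕ) ≤ f k := hfge k
      have : (⟨(k : ℕ), hkr⟩ : Fin r) = k := rfl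
      rw [this, hk]
      omega

lemma mem_Ja {t : ℕ} {a : Fin t → ℕ} {b : ℕ} :
    b ∈ Ja t a ↔ ∃ i : Fin t, ∃ m < a i, b = (i : ℕ) + m * t := by
  simp only [Ja, Finset.mem_biUnion, Finset.mem_univ, true_and, Finset.mem_image,
    Finset.mem_range]
  constructor
  · rintro ⟨i, m, hm, rfl⟩; exact ⟨i, m, hm, rfl⟩
  · rintro ⟨i, m, hm, rfl⟩; exact ⟨i, m, hm, rfl⟩

lemma res_mod {t : ℕ} (i : Fin t) (m : ℕ) : ((i : ℕ) + m * t) % t = (i : ℕ) := by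
  rw [Nat.add_mul_mod_self_right, Nat.mod_eq_of_lt i.isLt]

lemma res_inj {t : ℕ} (ht : 0 < t) (i : Fin t) :
    Function.Injective fun m => (i : ℕ) + m * t := by
  intro m m' h
  simp only at h
  exact Nat.eq_of_mul_eq_mul_right ht (by omega)

lemma Ja_filter {t : ℕ} (ht : 0 < t) (a : Fin t → ℕ) (i : Fin t) :
    (Ja t a).filter (fun b => b % t = (i : ℕ)) =
      (Finset.range (a i)).image fun m => (i : ℕ) + m * t := by
  ext b
  simp only [Finset.mem_filter, mem_Ja, Finset.mem_image, Finset.mem_range]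
  constructor
  · rintro ⟨⟨i', m, hm, rfl⟩, hmod⟩
    rw [res_mod] at hmod
    have : i' = i := Fin.ext hmod
    subst this
    exact ⟨m, hm, rfl⟩
  · rintro ⟨m, hm, rfl⟩
    exact ⟨⟨i, m, hm, rfl⟩, res_mod i m⟩

lemma aVec_Ja {t : ℕ} (ht : 0 < t) (a : Fin t → ℕ) : aVec t (Ja t a) = a := by
  funext i
  rw [aVec, Ja_filter ht a i, Finset.card_image_of_injective _ (res_inj ht i),
    Finset.card_range]

lemma card_Ja {t : ℕ} (ht : 0 < t) (a : Fin t → ℕ) : (Ja t a).card = ∑ i, a i := by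
  rw [Ja, Finset.card_biUnion]
  · refine Finset.sum_congr rfl fun i _ => ?_
    rw [Finset.card_image_of_injective _ (res_inj ht i), Finset.card_range]
  · intro i _ j _ hij
    simp only [Finset.disjoint_left, Finset.mem_image, Finset.mem_range]
    rintro b ⟨m, hm, rfl⟩ ⟨m', hm', he⟩
    have h1 := res_mod i m
    have h2 := res_mod j m'
    rw [he] at h2
    exact hij (Fin.ext (h1.symm.trans h2))

lemma justification_eq (r t : ℕ) (lam : Fin r → ℕ) :
    justification r t lam = Ja t (aVec t (betaSet r lam)) := by
  ext b
  simp only [justification, Ja, Finset.mem_biUnion, Finset.mem_range, Finset.mem_univ,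
    true_and, Finset.mem_image]
  constructor
  · rintro ⟨i, hit, m, hm, rfl⟩
    exact ⟨⟨i, hit⟩, m, hm, rfl⟩
  · rintro ⟨i, m, hm, rfl⟩
    exact ⟨(i : ℕ), i.isLt, m, hm, rfl⟩

lemma coreSize_eq (r t : ℕ) (lam : Fin r → ℕ) :
    coreSize r t lam = Fsize r t (aVec t (betaSet r lam)) := by
  rw [coreSize, justification_eq, Fsize]

lemma sum_betaSet {r s : ℕ} {lam : Fin r → ℕ} (h : IsRectPartition r s lam) :
    ∑ b ∈ betaSet r lam, b = (∑ i, lam i) + r * (r - 1) / 2 := by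
  rw [betaSet, Finset.sum_image (fun i _ j _ hij => bmap_injective h hij), Finset.sum_add_distrib]
  congr 1
  rw [Fin.sum_univ_eq_sum_range (fun i => r - 1 - i) r,
    Finset.sum_range_reflect (fun j => j) r, Finset.sum_range_id]

lemma core_filter_eq {r s t : ℕ} (ht : 0 < t) {lam : Fin r → ℕ}
    (hrect : IsRectPartition r s lam) (hcore : IsTCore r t lam) (i : Fin t) :
    (betaSet r lam).filter (fun b => b % t = (i : ℕ)) =
      (Finset.range (aVec t (betaSet r lam) i)).image fun m => (i : ℕ) + m * t := by
  classical
  set B := betaSet r lam with hB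
  set S := B.filter (fun b => b % t = (i : ℕ)) with hS
  have hrep : ∀ b ∈ S, b = (i : ℕ) + b / t * t := by
    intro b hb
    rw [hS, Finset.mem_filter] at hb
    have h1 := Nat.div_add_mod b t
    have h2 : t * (b / t) = b / t * t := Nat.mul_comm _ _
    omega
  set M := S.image (fun b => b / t) with hM
  have hMinj : Set.InjOn (fun b => b / t) S := by
    intro b hb b' hb' he
    have h1 := hrep b hb
    have h2 := hrep b' hb'
    simp only at he
    rw [he] at h1
    omega
  have hMcard : M.card = S.card := Finset.card_image_of_injOn hMinj
  have hMdc : ∀ m, m + 1 ∈ M → m ∈ M := by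
    intro m hm
    rw [hM, Finset.mem_image] at hm
    obtain ⟨b, hb, hbm⟩ := hm
    have hbrep := hrep b hb
    have hbB : b ∈ B := (Finset.mem_filter.1 hb).1
    have hbt : t ≤ b := by
      rw [hbrep, hbm]; nlinarith [i.isLt]
    have hbtB : b - t ∈ B := hcore b hbB hbt
    have hbteq : b - t = (i : ℕ) + m * t := by
      rw [hbrep, hbm]; ring_nf; omega
    have hbtS : b - t ∈ S := by
      rw [hS, Finset.mem_filter]
      refine ⟨hbtB, ?_⟩
      rw [hbteq]
      exact res_mod i m
    rw [hM, Finset.mem_image]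
    refine ⟨b - t, hbtS, ?_⟩
    rw [hbteq]
    rw [Nat.add_mul_div_right _ _ ht, Nat.div_eq_of_lt i.isLt, Nat.zero_add]
  have hMr : M = Finset.range S.card := by
    rw [← hMcard]; exact downclosed_eq_range M hMdc
  have hSM : S = M.image fun m => (i : ℕ) + m * t := by
    ext b
    constructor
    · intro hb
      rw [Finset.mem_image]
      exact ⟨b / t, Finset.mem_image_of_mem _ hb, (hrep b hb).symm⟩
    · intro hb
      rw [Finset.mem_image] at hb
      obtain ⟨m, hm, rfl⟩ := hb
      rw [hM, Finset.mem_image] at hm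
      obtain ⟨b, hb, rfl⟩ := hm
      rw [← hrep b hb]
      exact hb
  rw [hSM, hMr]
  rfl

lemma core_beta_justified {r s t : ℕ} (ht : 0 < t) {lam : Fin r → ℕ}
    (hrect : IsRectPartition r s lam) (hcore : IsTCore r t lam) :
    betaSet r lam = Ja t (aVec t (betaSet r lam)) := by
  classical
  ext b
  constructor
  · intro hb
    have hbt : b % t < t := Nat.mod_lt b ht
    have hbS : b ∈ (betaSet r lam).filter (fun x => x % t = ((⟨b % t, hbt⟩ : Fin t) : ℕ)) := by
      rw [Finset.mem_filter]; exact ⟨hb, rfl⟩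
    rw [core_filter_eq ht hrect hcore ⟨b % t, hbt⟩] at hbS
    rw [Finset.mem_image] at hbS
    obtain ⟨m, hm, he⟩ := hbS
    rw [mem_Ja]
    exact ⟨⟨b % t, hbt⟩, m, Finset.mem_range.1 hm, he.symm⟩
  · intro hb
    rw [mem_Ja] at hb
    obtain ⟨i, m, hm, rfl⟩ := hb
    have := Ja_filter ht (aVec t (betaSet r lam)) i
    rw [← core_filter_eq ht hrect hcore i] at this
    have hmem : (i : ℕ) + m * t ∈ (Finset.range (aVec t (betaSet r lam) i)).image
        fun m => (i : ℕ) + m * t :=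
      Finset.mem_image_of_mem _ (Finset.mem_range.2 hm)
    rw [← core_filter_eq ht hrect hcore i] at hmem
    exact (Finset.mem_filter.1 hmem).1

lemma Ja_subset {r t : ℕ} (ht : 0 < t) {a : Fin t → ℕ} (ha : ∀ i, a i ≤ r) :
    Ja t a ⊆ Finset.range (r + r * t) := by
  intro b hb
  rw [mem_Ja] at hb
  obtain ⟨i, m, hm, rfl⟩ := hb
  have h1 : (i : ℕ) < t := i.isLt
  have h2 : m < r := lt_of_lt_of_le hm (ha i)
  rw [Finset.mem_range]
  have : m * t ≤ (r - 1) * t := Nat.mul_le_mul_right t (by omega)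
  have h3 : (r - 1) * t + t = r * t := by
    cases r with
    | zero => omega
    | succ n => simp [Nat.succ_mul]
  omega

lemma Ja_core_closed {t : ℕ} (a : Fin t → ℕ) :
    ∀ b ∈ Ja t a, t ≤ b → b - t ∈ Ja t a := by
  intro b hb hbt
  rw [mem_Ja] at hb ⊢
  obtain ⟨i, m, hm, rfl⟩ := hb
  have h1 : (i : ℕ) < t := i.isLt
  rcases Nat.eq_zero_or_pos m with rfl | hmpos
  · exact absurd hbt (by omega)
  · refine ⟨i, m - 1, by omega, ?_⟩
    have h2 : m * t = (m - 1) * t + t := by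
      conv_lhs => rw [← Nat.succ_pred_eq_of_pos hmpos]
      rw [Nat.succ_mul]
      rfl
    omega

lemma card_class {t : ℕ} (ht : 0 < t) (N : ℕ) (i : Fin t) :
    ((Finset.range N).filter (fun b => b % t = (i : ℕ))).card = (N + t - 1 - (i : ℕ)) / t := by
  classical
  set K := (N + t - 1 - (i : ℕ)) / t with hK
  have hit : (i : ℕ) < t := i.isLt
  have key : ∀ m : ℕ, ((i : ℕ) + m * t < N ↔ m < K) := by
    intro m
    have h1 : m < K ↔ (m + 1) * t ≤ N + t - 1 - (i : ℕ) := by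
      rw [hK, Nat.lt_iff_add_one_le, Nat.le_div_iff_mul_le ht]
    have hp : (m + 1) * t = m * t + t := Nat.succ_mul m t
    constructor
    · intro h; apply h1.mpr; omega
    · intro h; have := h1.mp h; omega
  have himg : (Finset.range N).filter (fun b => b % t = (i : ℕ)) =
      (Finset.range K).image fun m => (i : ℕ) + m * t := by
    ext b
    simp only [Finset.mem_filter, Finset.mem_range, Finset.mem_image]
    constructor
    · rintro ⟨hbN, hmod⟩
      refine ⟨b / t, ?_, ?_⟩
      · have h1 := Nat.div_add_mod b t
        have h2 : t * (b / t) = b / t * t := Nat.mul_comm _ _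
        have h3 : (i : ℕ) + b / t * t = b := by omega
        exact (key (b / t)).mp (by omega)
      · have h1 := Nat.div_add_mod b t
        have h2 : t * (b / t) = b / t * t := Nat.mul_comm _ _
        omega
    · rintro ⟨m, hm, rfl⟩
      exact ⟨(key m).mpr hm, res_mod i m⟩
  rw [himg, Finset.card_image_of_injective _ (res_inj ht i), Finset.card_range]

lemma filter_biUnion_res {t N : ℕ} (p : Fin t → Finset ℕ)
    (hp : ∀ j, p j ⊆ (Finset.range N).filter (fun b => b % t = (j : ℕ))) (i : Fin t) :
    (Finset.univ.biUnion p).filter (fun b => b % t = (i : ℕ)) = p i := by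
  classical
  ext b
  simp only [Finset.mem_filter, Finset.mem_biUnion, Finset.mem_univ, true_and]
  constructor
  · rintro ⟨⟨j, hj⟩, hmod⟩
    have := (Finset.mem_filter.1 (hp j hj)).2
    have : j = i := Fin.ext (this.symm.trans hmod)
    subst this
    exact hj
  · intro hb
    exact ⟨⟨i, hb⟩, (Finset.mem_filter.1 (hp i hb)).2⟩

lemma fiber_card {r t N : ℕ} (ht : 0 < t) (a : Fin t → ℕ) (ha : ∑ i, a i = r) :
    (((Finset.range N).powersetCard r).filter (fun B => aVec t B = a)).card
      = ∏ i : Fin t, (((Finset.range N).filter (fun b => b % t = (i : ℕ))).card).choose (a i) := by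
  classical
  have goal2 : (((Finset.range N).powersetCard r).filter (fun B => aVec t B = a)).card
      = (Fintype.piFinset fun i : Fin t =>
          ((Finset.range N).filter (fun b => b % t = (i : ℕ))).powersetCard (a i)).card := by
    apply Finset.card_nbij' (fun B => fun i : Fin t => B.filter (fun b => b % t = (i : ℕ)))
      (fun p => Finset.univ.biUnion p)
    · intro B hB
      simp only [Finset.mem_coe] at hB ⊢
      rw [Finset.mem_filter, Finset.mem_powersetCard] at hB
      obtain ⟨⟨hsub, hcard⟩, haV⟩ := hB
      rw [Fintype.mem_piFinset]
      intro i
      rw [Finset.mem_powersetCard]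
      constructor
      · intro b hb
        rw [Finset.mem_filter] at hb ⊢
        exact ⟨hsub hb.1, hb.2⟩
      · rw [← haV]; rfl
    · intro p hp
      simp only [Finset.mem_coe] at hp ⊢
      rw [Fintype.mem_piFinset] at hp
      have hpsub : ∀ j, p j ⊆ (Finset.range N).filter (fun b => b % t = (j : ℕ)) :=
        fun j => (Finset.mem_powersetCard.1 (hp j)).1
      have hpcard : ∀ j, (p j).card = a j := fun j => (Finset.mem_powersetCard.1 (hp j)).2
      rw [Finset.mem_filter, Finset.mem_powersetCard]
      refine ⟨⟨?_, ?_⟩, ?_⟩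
      · intro b hb
        rw [Finset.mem_biUnion] at hb
        obtain ⟨j, -, hj⟩ := hb
        exact (Finset.mem_filter.1 (hpsub j hj)).1
      · rw [Finset.card_biUnion]
        · rw [← ha]; exact Finset.sum_congr rfl fun j _ => hpcard j
        · intro j _ j' _ hjj'
          rw [Function.onFun, Finset.disjoint_left]
          intro b hb hb'
          have h1 := (Finset.mem_filter.1 (hpsub j hb)).2
          have h2 := (Finset.mem_filter.1 (hpsub j' hb')).2
          exact hjj' (Fin.ext (h1.symm.trans h2))
      · funext i
        rw [aVec]
        rw [filter_biUnion_res p hpsub i, hpcard i]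
    · intro B hB
      simp only [Finset.mem_coe] at hB ⊢
      rw [Finset.mem_filter, Finset.mem_powersetCard] at hB
      obtain ⟨⟨hsub, hcard⟩, -⟩ := hB
      ext b
      rw [Finset.mem_biUnion]
      constructor
      · rintro ⟨j, -, hj⟩
        exact (Finset.mem_filter.1 hj).1
      · intro hb
        have hbt : b % t < t := Nat.mod_lt b ht
        exact ⟨⟨b % t, hbt⟩, Finset.mem_univ _, Finset.mem_filter.2 ⟨hb, rfl⟩⟩
    · intro p hp
      simp only [Finset.mem_coe] at hp ⊢
      rw [Fintype.mem_piFinset] at hp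
      have hpsub : ∀ j, p j ⊆ (Finset.range N).filter (fun b => b % t = (j : ℕ)) :=
        fun j => (Finset.mem_powersetCard.1 (hp j)).1
      funext i
      exact filter_biUnion_res p hpsub i
  rw [goal2, Fintype.card_piFinset]
  exact Finset.prod_congr rfl fun i _ => Finset.card_powersetCard _ _

def compFinset (r t : ℕ) : Finset (Fin t → ℕ) :=
  (Fintype.piFinset fun _ : Fin t => Finset.range (r + 1)).filter fun a => ∑ i, a i = r

lemma sum_aVec {t N r : ℕ} (ht : 0 < t) {B : Finset ℕ} (hsub : B ⊆ Finset.range N)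
    (hcard : B.card = r) : ∑ i, aVec t B i = r := by
  have H : ∀ b ∈ B, b % t ∈ Finset.range t := fun b _ => Finset.mem_range.2 (Nat.mod_lt b ht)
  have h1 := Finset.card_eq_sum_card_fiberwise H
  rw [hcard] at h1
  simp only [aVec]
  rw [Fin.sum_univ_eq_sum_range (fun i => (B.filter fun b => b % t = i).card) t]
  exact h1.symm

lemma aVec_mem_comp {N r t : ℕ} (ht : 0 < t) {B : Finset ℕ}
    (hB : B ∈ (Finset.range N).powersetCard r) : aVec t B ∈ compFinset r t := by
  rw [Finset.mem_powersetCard] at hB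
  rw [compFinset, Finset.mem_filter, Fintype.mem_piFinset]
  refine ⟨fun i => ?_, sum_aVec ht hB.1 hB.2⟩
  rw [Finset.mem_range, Nat.lt_add_one_iff, ← hB.2]
  exact Finset.card_filter_le _ _

lemma lhs_sum_eq (r t s : ℕ) (ht : 0 < t) (z : ℂ) :
    ∑ᶠ lam ∈ {lam : Fin r → ℕ | IsRectPartition r s lam}, z ^ coreSize r t lam
      = ∑ a ∈ compFinset r t,
          (∏ i : Fin t, ((nres r s t (i : ℕ)).choose (a i) : ℂ)) * z ^ Fsize r t a := by
  classical
  have hset : {lam : Fin r → ℕ | IsRectPartition r s lam}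
      = ↑((Fintype.piFinset fun _ : Fin r => Finset.range (s + 1)).filter
          fun lam => IsRectPartition r s lam) := by
    ext lam
    simp only [Set.mem_setOf_eq, Finset.coe_filter, Fintype.mem_piFinset, Finset.mem_range,
      Set.mem_setOf_eq]
    exact ⟨fun h => ⟨fun i => Nat.lt_add_one_iff.2 (h.2 i), h⟩, fun h => h.2⟩
  rw [hset, finsum_mem_coe_finset]
  have step1 : ∑ lam ∈ (Fintype.piFinset fun _ : Fin r => Finset.range (s + 1)).filter
        (fun lam => IsRectPartition r s lam), z ^ coreSize r t lam
      = ∑ B ∈ (Finset.range (r + s)).powersetCard r, z ^ Fsize r t (aVec t B) := by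
    apply Finset.sum_nbij (fun lam => betaSet r lam)
    · intro lam hlam
      rw [Finset.mem_filter] at hlam
      rw [Finset.mem_powersetCard]
      exact ⟨betaSet_subset hlam.2, betaSet_card hlam.2⟩
    · intro lam hlam mu hmu h
      simp only [Finset.coe_filter, Set.mem_setOf_eq] at hlam hmu
      exact betaSet_injOn hlam.2 hmu.2 h
    · intro B hB
      simp only [Finset.mem_coe, Finset.mem_powersetCard] at hB
      obtain ⟨lam, hlam, hbeta⟩ := exists_rect_of_subset hB.1 hB.2
      refine ⟨lam, ?_, hbeta⟩
      simp only [Finset.mem_coe, Finset.mem_filter, Fintype.mem_piFinset, Finset.mem_range]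
      exact ⟨fun i => Nat.lt_add_one_iff.2 (hlam.2 i), hlam⟩
    · intro lam _
      rw [coreSize_eq]
  rw [step1]
  rw [← Finset.sum_fiberwise_of_maps_to (fun B hB => aVec_mem_comp ht hB)
    (fun B => z ^ Fsize r t (aVec t B))]
  apply Finset.sum_congr rfl
  intro a ha
  have hsum : ∑ i, a i = r := (Finset.mem_filter.1 ha).2
  have : ∑ B ∈ ((Finset.range (r + s)).powersetCard r).filter (fun B => aVec t B = a),
      z ^ Fsize r t (aVec t B)
      = ∑ B ∈ ((Finset.range (r + s)).powersetCard r).filter (fun B => aVec t B = a),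
        z ^ Fsize r t a := by
    apply Finset.sum_congr rfl
    intro B hB
    rw [(Finset.mem_filter.1 hB).2]
  rw [this, Finset.sum_const, fiber_card ht a hsum, nsmul_eq_mul]
  congr 1
  push_cast
  apply Finset.prod_congr rfl
  intro i _
  rw [card_class ht (r + s) i]
  rfl

lemma rhs_sum_eq (r t : ℕ) (ht : 0 < t) (z : ℂ) :
    ∑ᶠ ρ ∈ {ρ : Fin r → ℕ | IsRectPartition r (r * t) ρ ∧ IsTCore r t ρ},
        z ^ (∑ i, ρ i) * ((1 / (t : ℂ) ^ r) *
          ((r.factorial : ℂ) / ∏ i ∈ Finset.range t, ((aCount r t ρ i).factorial : ℂ)))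
      = ∑ a ∈ compFinset r t,
          z ^ Fsize r t a * ((1 / (t : ℂ) ^ r) *
            ((r.factorial : ℂ) / ∏ i : Fin t, ((a i).factorial : ℂ))) := by
  classical
  have hset : {ρ : Fin r → ℕ | IsRectPartition r (r * t) ρ ∧ IsTCore r t ρ}
      = ↑((Fintype.piFinset fun _ : Fin r => Finset.range (r * t + 1)).filter
          fun ρ => IsRectPartition r (r * t) ρ ∧ IsTCore r t ρ) := by
    ext ρ
    simp only [Set.mem_setOf_eq, Finset.coe_filter, Fintype.mem_piFinset, Finset.mem_range,
      Set.mem_setOf_eq]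
    exact ⟨fun h => ⟨fun i => Nat.lt_add_one_iff.2 (h.1.2 i), h⟩, fun h => h.2⟩
  rw [hset, finsum_mem_coe_finset]
  apply Finset.sum_nbij (fun ρ => aVec t (betaSet r ρ))
  · intro ρ hρ
    rw [Finset.mem_filter] at hρ
    have hB : betaSet r ρ ∈ (Finset.range (r + r * t)).powersetCard r :=
      Finset.mem_powersetCard.2 ⟨betaSet_subset hρ.2.1, betaSet_card hρ.2.1⟩
    exact aVec_mem_comp ht hB
  · intro ρ hρ ρ' hρ' h
    simp only [Finset.mem_coe, Finset.mem_filter] at hρ hρ'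
    have h1 := core_beta_justified ht hρ.2.1 hρ.2.2
    have h2 := core_beta_justified ht hρ'.2.1 hρ'.2.2
    simp only at h
    rw [h] at h1
    exact betaSet_injOn hρ.2.1 hρ'.2.1 (h1.trans h2.symm)
  · intro a ha
    simp only [Finset.mem_coe, compFinset, Finset.mem_filter, Fintype.mem_piFinset,
      Finset.mem_range] at ha
    have hale : ∀ i, a i ≤ r := fun i => Nat.lt_add_one_iff.1 (ha.1 i)
    have hsub : Ja t a ⊆ Finset.range (r + r * t) := Ja_subset ht hale
    have hcard : (Ja t a).card = r := by rw [card_Ja ht a, ha.2]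
    obtain ⟨ρ, hrect, hbeta⟩ := exists_rect_of_subset hsub hcard
    have hcore : IsTCore r t ρ := by
      intro b hb hbt
      rw [hbeta] at hb ⊢
      exact Ja_core_closed a b hb hbt
    refine ⟨ρ, ?_, ?_⟩
    · simp only [Finset.mem_coe, Finset.mem_filter, Fintype.mem_piFinset, Finset.mem_range]
      exact ⟨fun i => Nat.lt_add_one_iff.2 (hrect.2 i), hrect, hcore⟩
    · simp only [hbeta]
      rw [aVec_Ja ht a]
  · intro ρ hρ
    rw [Finset.mem_filter] at hρ
    have hjust := core_beta_justified ht hρ.2.1 hρ.2.2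
    have hFsize : Fsize r t (aVec t (betaSet r ρ)) = ∑ i, ρ i := by
      rw [Fsize, ← hjust, sum_betaSet hρ.2.1]
      omega
    rw [hFsize]
    congr 2
    rw [← Fin.prod_univ_eq_prod_range (fun i => ((aCount r t ρ i).factorial : ℂ)) t]
    rfl

lemma lim_base (c : ℝ) (hc : c ≠ 0) (A : ℝ) :
    Filter.Tendsto (fun s : ℕ => ((s : ℝ) + A) / (c * s)) Filter.atTop (nhds (1 / c)) := by
  have h0 : Filter.Tendsto (fun s : ℕ => 1 / (s : ℝ)) Filter.atTop (nhds 0) :=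
    tendsto_one_div_atTop_nhds_zero_nat
  have h1 : Filter.Tendsto (fun s : ℕ => (1 + A * (1 / (s : ℝ))) / c) Filter.atTop
      (nhds ((1 + A * 0) / c)) :=
    (tendsto_const_nhds.add (h0.const_mul A)).div_const c
  have h2 : (1 + A * 0) / c = 1 / c := by ring
  rw [h2] at h1
  apply h1.congr'
  filter_upwards [Filter.eventually_ge_atTop 1] with s hs
  have hs0 : (0 : ℝ) < s := by exact_mod_cast Nat.lt_of_lt_of_le Nat.zero_lt_one hs
  field_simp

lemma lim_aux (c : ℕ) (hc : 0 < c) (A B : ℝ) (v : ℕ → ℕ)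
    (hv : ∀ᶠ s : ℕ in Filter.atTop,
      (s : ℝ) + A ≤ (c : ℝ) * (v s) ∧ (c : ℝ) * (v s) ≤ (s : ℝ) + B) :
    Filter.Tendsto (fun s : ℕ => ((v s : ℝ) / (s : ℝ))) Filter.atTop (nhds (1 / (c : ℝ))) := by
  have hc' : (0 : ℝ) < c := by exact_mod_cast hc
  apply tendsto_of_tendsto_of_tendsto_of_le_of_le' (lim_base c hc'.ne' A) (lim_base c hc'.ne' B)
  · filter_upwards [hv, Filter.eventually_ge_atTop 1] with s hs hs1
    have hs0 : (0 : ℝ) < s := by exact_mod_cast Nat.lt_of_lt_of_le Nat.zero_lt_one hs1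
    rw [div_le_div_iff₀ (by positivity) hs0]
    have h2 := mul_le_mul_of_nonneg_right hs.1 hs0.le
    have h3 : ((c : ℝ) * (v s)) * s = (v s) * ((c : ℝ) * s) := by ring
    linarith
  · filter_upwards [hv, Filter.eventually_ge_atTop 1] with s hs hs1
    have hs0 : (0 : ℝ) < s := by exact_mod_cast Nat.lt_of_lt_of_le Nat.zero_lt_one hs1
    rw [div_le_div_iff₀ hs0 (by positivity)]
    have h2 := mul_le_mul_of_nonneg_right hs.2 hs0.le
    have h3 : ((c : ℝ) * (v s)) * s = (v s) * ((c : ℝ) * s) := by ring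
    linarith

lemma nres_factor_tendsto (r t : ℕ) (ht : 2 ≤ t) (i : Fin t) (j : ℕ) :
    Filter.Tendsto (fun s : ℕ => ((nres r s t (i : ℕ) - j : ℕ) : ℝ) / (s : ℝ)) Filter.atTop
      (nhds (1 / (t : ℝ))) := by
  have ht0 : 0 < t := by omega
  have hit : (i : ℕ) < t := i.isLt
  set c0 := r + t - 1 - (i : ℕ) with hc0
  apply lim_aux t ht0 ((c0 : ℝ) - t - t * j) ((c0 : ℝ) - t * j)
  filter_upwards [Filter.eventually_ge_atTop (t * j + t)] with s hs
  have hnum : r + s + t - 1 - (i : ℕ) = s + c0 := by omega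
  have hn : nres r s t (i : ℕ) = (s + c0) / t := by rw [nres, hnum]
  have hdm := Nat.div_add_mod (s + c0) t
  have hmlt : (s + c0) % t < t := Nat.mod_lt _ ht0
  set n := (s + c0) / t with hn'
  have hjn : j < n := by
    have h1 : t * n + t > s + c0 := by omega
    have h2 : t * j + t ≤ s := hs
    have h3 : t * j < t * n := by omega
    exact lt_of_mul_lt_mul_left h3 (Nat.zero_le t)
  have hcast : ((nres r s t (i : ℕ) - j : ℕ) : ℝ) = (n : ℝ) - j := by
    rw [hn, Nat.cast_sub hjn.le]
  rw [hcast]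
  have hdmR : (t : ℝ) * n + ((s + c0) % t : ℕ) = (s : ℝ) + c0 := by
    exact_mod_cast congrArg (Nat.cast : ℕ → ℝ) hdm
  have hmltR : (((s + c0) % t : ℕ) : ℝ) < t := by exact_mod_cast hmlt
  have hmnn : (0 : ℝ) ≤ (((s + c0) % t : ℕ) : ℝ) := Nat.cast_nonneg _
  constructor
  · have : (t : ℝ) * ((n : ℝ) - j) = (t : ℝ) * n - t * j := by ring
    rw [this]
    linarith
  · have : (t : ℝ) * ((n : ℝ) - j) = (t : ℝ) * n - t * j := by ring
    rw [this]
    linarith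

lemma denom_factor_tendsto (r : ℕ) (k : ℕ) (hk : k < r) :
    Filter.Tendsto (fun s : ℕ => ((r + s - k : ℕ) : ℝ) / (s : ℝ)) Filter.atTop (nhds 1) := by
  have h := lim_aux 1 Nat.one_pos 0 (r : ℝ) (fun s => r + s - k) ?_
  · simpa using h
  · filter_upwards [Filter.eventually_ge_atTop 0] with s _
    have hcast : ((r + s - k : ℕ) : ℝ) = (r : ℝ) + s - k := by
      have : k ≤ r + s := by omega
      push_cast [Nat.cast_sub this]
      ring
    rw [hcast]
    have hkR : (k : ℝ) ≤ r := by exact_mod_cast hk.le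
    constructor
    · simp only [Nat.cast_one, one_mul]
      linarith
    · simp only [Nat.cast_one, one_mul]
      linarith

lemma cast_choose_real (n k : ℕ) :
    ((n.choose k : ℕ) : ℝ) = (n.descFactorial k : ℝ) / (k.factorial : ℝ) := by
  rw [eq_div_iff (by exact_mod_cast k.factorial_ne_zero)]
  norm_cast
  rw [Nat.descFactorial_eq_factorial_mul_choose, Nat.mul_comm]

set_option maxHeartbeats 1000000 in
lemma ratio_tendsto (r t : ℕ) (hr : 1 ≤ r) (ht : 2 ≤ t) (a : Fin t → ℕ)
    (hsum : ∑ i, a i = r) :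
    Filter.Tendsto (fun s : ℕ => (∏ i : Fin t, ((nres r s t (i : ℕ)).choose (a i) : ℝ)) /
        (((r + s).choose r : ℕ) : ℝ)) Filter.atTop
      (nhds ((1 / (t : ℝ) ^ r) * ((r.factorial : ℝ) / ∏ i : Fin t, ((a i).factorial : ℝ)))) := by
  have h1 : Filter.Tendsto (fun s : ℕ => ∏ i : Fin t, ∏ j ∈ Finset.range (a i),
      ((nres r s t (i : ℕ) - j : ℕ) : ℝ) / (s : ℝ)) Filter.atTop
      (nhds (∏ i : Fin t, ∏ _j ∈ Finset.range (a i), (1 / (t : ℝ)))) := by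
    apply tendsto_finset_prod
    intro i _
    apply tendsto_finset_prod
    intro j _
    exact nres_factor_tendsto r t ht i j
  have hv1 : (∏ i : Fin t, ∏ _j ∈ Finset.range (a i), (1 / (t : ℝ))) = (1 / (t : ℝ)) ^ r := by
    simp only [Finset.prod_const, Finset.card_range]
    rw [Finset.prod_pow_eq_pow_sum, hsum]
  rw [hv1] at h1
  have h2 : Filter.Tendsto (fun s : ℕ => ∏ k ∈ Finset.range r,
      ((r + s - k : ℕ) : ℝ) / (s : ℝ)) Filter.atTop
      (nhds (∏ _k ∈ Finset.range r, (1 : ℝ))) := by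
    apply tendsto_finset_prod
    intro k hk
    exact denom_factor_tendsto r k (Finset.mem_range.1 hk)
  rw [Finset.prod_const_one] at h2
  have h3 := h1.div h2 one_ne_zero
  rw [div_one] at h3
  set C : ℝ := (r.factorial : ℝ) / ∏ i : Fin t, ((a i).factorial : ℝ) with hC
  have h4 := h3.const_mul C
  have hval : C * (1 / (t : ℝ)) ^ r = (1 / (t : ℝ) ^ r) * C := by
    rw [div_pow, one_pow, mul_comm]
  rw [hval] at h4
  apply h4.congr'
  filter_upwards [Filter.eventually_ge_atTop 1] with s hs1
  have hs0 : (0 : ℝ) < s := by exact_mod_cast Nat.lt_of_lt_of_le Nat.zero_lt_one hs1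
  set P : ℝ := ∏ i : Fin t, ((nres r s t (i : ℕ)).descFactorial (a i) : ℝ) with hP
  set D : ℝ := (((r + s).descFactorial r : ℕ) : ℝ) with hD
  set A : ℝ := ∏ i : Fin t, ((a i).factorial : ℝ) with hA
  have hgP : (∏ i : Fin t, ∏ j ∈ Finset.range (a i),
      ((nres r s t (i : ℕ) - j : ℕ) : ℝ) / (s : ℝ)) = P / (s : ℝ) ^ r := by
    have step : ∀ i : Fin t, (∏ j ∈ Finset.range (a i),
        ((nres r s t (i : ℕ) - j : ℕ) : ℝ) / (s : ℝ))
        = ((nres r s t (i : ℕ)).descFactorial (a i) : ℝ) / (s : ℝ) ^ (a i) := by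
      intro i
      rw [Finset.prod_div_distrib, Finset.prod_const, Finset.card_range]
      congr 1
      rw [Nat.descFactorial_eq_prod_range, Nat.cast_prod]
    rw [Finset.prod_congr rfl fun i _ => step i, Finset.prod_div_distrib,
      Finset.prod_pow_eq_pow_sum, hsum, hP]
  have hgD : (∏ k ∈ Finset.range r, ((r + s - k : ℕ) : ℝ) / (s : ℝ)) = D / (s : ℝ) ^ r := by
    rw [Finset.prod_div_distrib, Finset.prod_const, Finset.card_range]
    congr 1
    rw [hD, Nat.descFactorial_eq_prod_range, Nat.cast_prod]
  have hfP : (∏ i : Fin t, ((nres r s t (i : ℕ)).choose (a i) : ℝ)) = P / A := by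
    rw [Finset.prod_congr rfl fun i (_ : i ∈ Finset.univ) => cast_choose_real _ (a i),
      Finset.prod_div_distrib, hP, hA]
  have hfD : (((r + s).choose r : ℕ) : ℝ) = D / (r.factorial : ℝ) := cast_choose_real _ r
  have hD0 : D ≠ 0 := by
    rw [hD]
    have : (r + s).descFactorial r ≠ 0 := by
      intro h
      have := Nat.descFactorial_eq_zero_iff_lt.1 h
      omega
    exact_mod_cast this
  have hA0 : A ≠ 0 := by
    rw [hA]
    apply Finset.prod_ne_zero_iff.2
    intro i _
    exact_mod_cast (a i).factorial_ne_zero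
  have hrf0 : (r.factorial : ℝ) ≠ 0 := by exact_mod_cast r.factorial_ne_zero
  have hsr0 : (s : ℝ) ^ r ≠ 0 := by positivity
  simp only [Pi.div_apply, hgP, hgD, hfP, hfD, hC]
  field_simp

/-- For every `z : ℂ`, the probability generating function of the size of the
`t`-core of a uniformly random partition in `Par_{r,s}` converges, as `s → ∞`, to
`Σ_ρ z^{|ρ|} (1/t^r) r!/(a_0(ρ)! ⋯ a_{t−1}(ρ)!)`, the sum running over all `t`-cores
`ρ ∈ Par_{r,rt}`. -/
theorem pgf_core_size_limit (r t : ℕ) (hr : 1 ≤ r) (ht : 2 ≤ t) (z : ℂ) :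
    Filter.Tendsto
      (fun s : ℕ => (1 / ((r + s).choose r : ℂ)) *
        ∑ᶠ lam ∈ {lam : Fin r → ℕ | IsRectPartition r s lam}, z ^ coreSize r t lam)
      Filter.atTop
      (nhds (∑ᶠ ρ ∈ {ρ : Fin r → ℕ | IsRectPartition r (r * t) ρ ∧ IsTCore r t ρ},
        z ^ (∑ i, ρ i) * ((1 / (t : ℂ) ^ r) *
          ((r.factorial : ℂ) / ∏ i ∈ Finset.range t, ((aCount r t ρ i).factorial : ℂ))))) := by
  have ht0 : 0 < t := by omega
  rw [rhs_sum_eq r t ht0 z]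
  have main : Filter.Tendsto (fun s : ℕ => ∑ a ∈ compFinset r t,
      ((∏ i : Fin t, ((nres r s t (i : ℕ)).choose (a i) : ℂ)) / (((r + s).choose r : ℕ) : ℂ))
        * z ^ Fsize r t a)
      Filter.atTop
      (nhds (∑ a ∈ compFinset r t, z ^ Fsize r t a * ((1 / (t : ℂ) ^ r) *
        ((r.factorial : ℂ) / ∏ i : Fin t, ((a i).factorial : ℂ))))) := by
    apply tendsto_finset_sum
    intro a ha
    have hsum : ∑ i, a i = r := (Finset.mem_filter.1 ha).2
    have hreal := ratio_tendsto r t hr ht a hsum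
    have hcplx := (Complex.continuous_ofReal.tendsto _).comp hreal
    have hfn : (fun s : ℕ => ((((∏ i : Fin t, ((nres r s t (i : ℕ)).choose (a i) : ℝ)) /
          (((r + s).choose r : ℕ) : ℝ)) : ℝ) : ℂ))
        = fun s : ℕ => (∏ i : Fin t, ((nres r s t (i : ℕ)).choose (a i) : ℂ)) /
          (((r + s).choose r : ℕ) : ℂ) := by
      funext s
      push_cast
      rfl
    have hvl : ((((1 / (t : ℝ) ^ r) *
          ((r.factorial : ℝ) / ∏ i : Fin t, ((a i).factorial : ℝ))) : ℝ) : ℂ)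
        = (1 / (t : ℂ) ^ r) * ((r.factorial : ℂ) / ∏ i : Fin t, ((a i).factorial : ℂ)) := by
      push_cast
      rfl
    rw [hvl] at hcplx
    have hcplx2 : Filter.Tendsto (fun s : ℕ => (∏ i : Fin t,
          ((nres r s t (i : ℕ)).choose (a i) : ℂ)) / (((r + s).choose r : ℕ) : ℂ))
        Filter.atTop (nhds ((1 / (t : ℂ) ^ r) *
          ((r.factorial : ℂ) / ∏ i : Fin t, ((a i).factorial : ℂ)))) := by
      rw [← hfn]
      exact hcplx
    have hmul := hcplx2.mul_const (z ^ Fsize r t a)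
    rw [mul_comm (z ^ Fsize r t a)]
    exact hmul
  apply main.congr
  intro s
  rw [lhs_sum_eq r t s ht0 z, Finset.mul_sum]
  apply Finset.sum_congr rfl
  intro a _
  ring
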